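/- Let α > −1 and let f be a nonnegative locally integrable function on the upper half plane. Then the maximal Bergman projection satisfies the pointwise bound P⁺_α f(z) ≤ C Σ_{β ∈ {0,1/3}} Q^β_α f(z) for all z ∈ ℋ, where C depends only on α. -/

import Mathlib

open MeasureTheory

noncomputable section

/-- The upper half plane. -/
def UHP : Set ℂ := {z | 0 < z.im}

/-- The Carleson box `Q_{[a,b)} = [a,b) × (0, b-a]` in the upper half plane. -/
def cbox (a b : ℝ) : Set ℂ := {z | a ≤ z.re ∧ z.re < b ∧ 0 < z.im ∧ z.im ≤ b - a}

/-- The Carleson box over the interval of the shifted dyadic grid `𝒟^β` with parameters `j, m`. -/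
def gridbox (β : ℝ) (j m : ℤ) : Set ℂ :=
  cbox ((2:ℝ)^j * ((m : ℝ) + (-1:ℝ)^j * β)) ((2:ℝ)^j * ((m : ℝ) + 1 + (-1:ℝ)^j * β))

/-- The maximal Bergman projection `P⁺_α f(z) = ∫_ℋ f(ξ) |z-ξ̄|^{-(2+α)} (Im ξ)^α dA(ξ)`. -/
def maxBergman (α : ℝ) (f : ℂ → ℝ) (z : ℂ) : ℝ :=
  ∫ ξ in UHP, f ξ / ‖z - (starRingEnd ℂ) ξ‖ ^ (2 + α) * ξ.im ^ α

/-- The dyadic model operator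
`Q^β_α f = Σ_{I ∈ 𝒟^β} ⟨f, 1_{Q_I}/|I|^{2+α}⟩_α 1_{Q_I}`. -/
def dyadicOp (α β : ℝ) (f : ℂ → ℝ) (z : ℂ) : ℝ :=
  ∑' (j : ℤ) (m : ℤ),
    (gridbox β j m).indicator
      (fun _ => (∫ ξ in gridbox β j m, f ξ * ξ.im ^ α) / ((2:ℝ)^j) ^ (2 + α)) z

/-! ### Auxiliary definitions and lemmas -/

/-- The integrand of the maximal Bergman projection. -/
def gfun (α : ℝ) (f : ℂ → ℝ) (z : ℂ) (ξ : ℂ) : ℝ :=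
  f ξ / ‖z - (starRingEnd ℂ) ξ‖ ^ (2 + α) * ξ.im ^ α

/-- The inner sum (over `m`) of the dyadic operator at scale `j`. -/
def Tj (α β : ℝ) (f : ℂ → ℝ) (z : ℂ) (j : ℤ) : ℝ :=
  ∑' (m : ℤ),
    (gridbox β j m).indicator
      (fun _ => (∫ ξ in gridbox β j m, f ξ * ξ.im ^ α) / ((2:ℝ)^j) ^ (2 + α)) z

lemma dyadicOp_eq_tsum_Tj (α β : ℝ) (f : ℂ → ℝ) (z : ℂ) :
    dyadicOp α β f z = ∑' j : ℤ, Tj α β f z j := rfl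

lemma maxBergman_eq (α : ℝ) (f : ℂ → ℝ) (z : ℂ) :
    maxBergman α f z = ∫ ξ in UHP, gfun α f z ξ := rfl

lemma measurableSet_UHP : MeasurableSet UHP :=
  measurableSet_lt measurable_const Complex.measurable_im

lemma measurableSet_cbox (a b : ℝ) : MeasurableSet (cbox a b) := by
  have h : cbox a b = Complex.re ⁻¹' (Set.Ico a b) ∩ Complex.im ⁻¹' (Set.Ioc 0 (b - a)) := by
    ext w
    simp only [cbox, Set.mem_setOf_eq, Set.mem_inter_iff, Set.mem_preimage, Set.mem_Ico,
      Set.mem_Ioc]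
    tauto
  rw [h]
  exact (measurableSet_Ico.preimage Complex.measurable_re).inter
    (measurableSet_Ioc.preimage Complex.measurable_im)

lemma measurableSet_gridbox (β : ℝ) (j m : ℤ) : MeasurableSet (gridbox β j m) :=
  measurableSet_cbox _ _

lemma mem_gridbox_iff {β : ℝ} {j m : ℤ} {w : ℂ} :
    w ∈ gridbox β j m ↔
      (2:ℝ)^j * ((m : ℝ) + (-1:ℝ)^j * β) ≤ w.re ∧
      w.re < (2:ℝ)^j * ((m : ℝ) + 1 + (-1:ℝ)^j * β) ∧
      0 < w.im ∧
      w.im ≤ (2:ℝ)^j * ((m : ℝ) + 1 + (-1:ℝ)^j * β) - (2:ℝ)^j * ((m : ℝ) + (-1:ℝ)^j * β) :=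
  Iff.rfl

lemma gridbox_subset_UHP (β : ℝ) (j m : ℤ) : gridbox β j m ⊆ UHP :=
  fun _ hw => (mem_gridbox_iff.mp hw).2.2.1

lemma gridbox_width (β : ℝ) (j m : ℤ) :
    (2:ℝ)^j * ((m : ℝ) + 1 + (-1:ℝ)^j * β) - (2:ℝ)^j * ((m : ℝ) + (-1:ℝ)^j * β) = (2:ℝ)^j := by
  ring

lemma rr_facts {z ξ : ℂ} (hz : 0 < z.im) (hξ : 0 < ξ.im) :
    0 < ‖z - (starRingEnd ℂ) ξ‖ ∧
    z.im + ξ.im ≤ ‖z - (starRingEnd ℂ) ξ‖ ∧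
    |z.re - ξ.re| ≤ ‖z - (starRingEnd ℂ) ξ‖ := by
  have him : (z - (starRingEnd ℂ) ξ).im = z.im + ξ.im := by simp
  have hre : (z - (starRingEnd ℂ) ξ).re = z.re - ξ.re := by simp
  have h1 := Complex.abs_im_le_norm (z - (starRingEnd ℂ) ξ)
  have h2 := Complex.abs_re_le_norm (z - (starRingEnd ℂ) ξ)
  rw [him] at h1
  rw [hre] at h2
  have h3 : z.im + ξ.im ≤ |z.im + ξ.im| := le_abs_self _
  exact ⟨by linarith, by linarith, h2⟩

/-- If both `w` and `ξ` lie in the same grid box of scale `2^j`, then `|w - ξ̄| ≤ 3·2^j`. -/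
lemma abs_le_of_mem_gridbox {β : ℝ} {j m : ℤ} {w ξ : ℂ}
    (hw : w ∈ gridbox β j m) (hξ : ξ ∈ gridbox β j m) :
    ‖w - (starRingEnd ℂ) ξ‖ ≤ 3 * (2:ℝ)^j := by
  obtain ⟨ha, hb, h0, h1⟩ := mem_gridbox_iff.mp hw
  obtain ⟨ha', hb', h0', h1'⟩ := mem_gridbox_iff.mp hξ
  have hwidth := gridbox_width β j m
  have him : (w - (starRingEnd ℂ) ξ).im = w.im + ξ.im := by simp
  have hre : (w - (starRingEnd ℂ) ξ).re = w.re - ξ.re := by simp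
  have h2 := Complex.norm_le_abs_re_add_abs_im (w - (starRingEnd ℂ) ξ)
  rw [him, hre] at h2
  have h3 : |w.re - ξ.re| ≤ (2:ℝ)^j := abs_le.mpr ⟨by linarith, by linarith⟩
  have h4 : |w.im + ξ.im| = w.im + ξ.im := abs_of_pos (by linarith)
  rw [h4] at h2
  linarith

/-- The one-third trick: around any point, at any dyadic scale, one of the two shifted
dyadic grids has an interval containing a comfortable neighbourhood of the point. -/
lemma onethird (j : ℤ) (x : ℝ) :
    ∃ β ∈ ({0, 1/3} : Set ℝ), ∃ m : ℤ,
      (2:ℝ)^j * ((m:ℝ) + (-1:ℝ)^j * β) ≤ x - (2:ℝ)^j/7 ∧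
      x + (2:ℝ)^j/7 < (2:ℝ)^j * ((m:ℝ) + 1 + (-1:ℝ)^j * β) := by
  have ht : (0:ℝ) < (2:ℝ)^j := zpow_pos two_pos j
  have key : ∀ (β : ℝ) (m : ℤ), 1/6 ≤ x/(2:ℝ)^j - ((m:ℝ) + (-1:ℝ)^j * β) →
      x/(2:ℝ)^j - ((m:ℝ) + (-1:ℝ)^j * β) ≤ 5/6 →
      (2:ℝ)^j * ((m:ℝ) + (-1:ℝ)^j * β) ≤ x - (2:ℝ)^j/7 ∧
      x + (2:ℝ)^j/7 < (2:ℝ)^j * ((m:ℝ) + 1 + (-1:ℝ)^j * β) := by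
    intro β m h1 h2
    have hx : x = (2:ℝ)^j * (x/(2:ℝ)^j) := (mul_div_cancel₀ x ht.ne').symm
    constructor
    · have hle : (m:ℝ) + (-1:ℝ)^j * β ≤ x/(2:ℝ)^j - 1/7 := by linarith
      have := mul_le_mul_of_nonneg_left hle ht.le
      rw [mul_sub] at this
      nlinarith [this]
    · have hlt : x/(2:ℝ)^j + 1/7 < (m:ℝ) + 1 + (-1:ℝ)^j * β := by linarith
      have := mul_lt_mul_of_pos_left hlt ht
      rw [mul_add] at this
      nlinarith [this]
  have hε : (-1:ℝ)^j = 1 ∨ (-1:ℝ)^j = -1 := by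
    rcases Int.even_or_odd j with h | h
    · exact Or.inl (Even.neg_one_zpow h)
    · exact Or.inr (Odd.neg_one_zpow h)
  set y := x/(2:ℝ)^j with hy
  have h0 := Int.floor_le y
  have h1 := Int.lt_floor_add_one y
  set n := ⌊y⌋ with hn
  by_cases hcase : 1/6 ≤ y - (n:ℝ) ∧ y - (n:ℝ) ≤ 5/6
  · refine ⟨0, Set.mem_insert _ _, n, key 0 n ?_ ?_⟩ <;> rw [mul_zero] <;> linarith [hcase.1, hcase.2]
  · have hbad : y - (n:ℝ) < 1/6 ∨ 5/6 < y - (n:ℝ) := by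
      by_contra hc
      push_neg at hc
      exact hcase ⟨hc.1, hc.2⟩
    refine ⟨1/3, Set.mem_insert_iff.mpr (Or.inr rfl), ?_⟩
    rcases hε with hε | hε
    · rcases hbad with hu | hu
      · refine ⟨n - 1, key (1/3) (n-1) ?_ ?_⟩ <;> rw [hε] <;> push_cast <;> linarith
      · refine ⟨n, key (1/3) n ?_ ?_⟩ <;> rw [hε] <;> push_cast <;> linarith
    · rcases hbad with hu | hu
      · refine ⟨n, key (1/3) n ?_ ?_⟩ <;> rw [hε] <;> push_cast <;> linarith
      · refine ⟨n + 1, key (1/3) (n+1) ?_ ?_⟩ <;> rw [hε] <;> push_cast <;> linarith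

/-- At a fixed scale and grid, the box containing a given point is unique. -/
lemma gridbox_unique {β : ℝ} {j m m' : ℤ} {w : ℂ}
    (h : w ∈ gridbox β j m) (h' : w ∈ gridbox β j m') : m' = m := by
  have ht : (0:ℝ) < (2:ℝ)^j := zpow_pos two_pos j
  obtain ⟨ha, hb, -, -⟩ := mem_gridbox_iff.mp h
  obtain ⟨ha', hb', -, -⟩ := mem_gridbox_iff.mp h'
  have key : ∀ a b : ℤ, (2:ℝ)^j * ((a:ℝ) + (-1:ℝ)^j * β) ≤ w.re →
      w.re < (2:ℝ)^j * ((b:ℝ) + 1 + (-1:ℝ)^j * β) → a ≤ b := by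
    intro a b hA hB
    have := hA.trans_lt hB
    have h2 : ((a:ℝ) + (-1:ℝ)^j * β) < ((b:ℝ) + 1 + (-1:ℝ)^j * β) :=
      lt_of_mul_lt_mul_left this ht.le
    have : (a:ℝ) < (b:ℝ) + 1 := by linarith
    exact_mod_cast Int.lt_add_one_iff.mp (by exact_mod_cast this)
  exact le_antisymm (key m' m ha' hb) (key m m' ha hb')

/-- The point `z` belongs to the grid box at scale `j` indexed by the floor, provided
`0 < z.im ≤ 2^j`. -/
lemma mem_gridbox_floor {z : ℂ} (hz : 0 < z.im) {j : ℤ} (h : z.im ≤ (2:ℝ)^j) (β : ℝ) :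
    z ∈ gridbox β j ⌊z.re/(2:ℝ)^j - (-1:ℝ)^j * β⌋ := by
  have ht : (0:ℝ) < (2:ℝ)^j := zpow_pos two_pos j
  set c := (-1:ℝ)^j * β with hc
  set y := z.re/(2:ℝ)^j - c with hy
  have h0 := Int.floor_le y
  have h1 := Int.lt_floor_add_one y
  set m := ⌊y⌋ with hm
  refine mem_gridbox_iff.mpr ⟨?_, ?_, hz, ?_⟩
  · have : (m:ℝ) + c ≤ z.re/(2:ℝ)^j := by rw [hy] at h0; linarith
    have := mul_le_mul_of_nonneg_left this ht.le
    rwa [mul_div_cancel₀ z.re ht.ne'] at this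
  · have : z.re/(2:ℝ)^j < (m:ℝ) + 1 + c := by rw [hy] at h1; linarith
    have := mul_lt_mul_of_pos_left this ht
    rwa [mul_div_cancel₀ z.re ht.ne'] at this
  · rw [gridbox_width]; exact h

lemma Tj_nonneg (α β : ℝ) (f : ℂ → ℝ) (hf : ∀ ξ, 0 ≤ f ξ) (z : ℂ) (j : ℤ) :
    0 ≤ Tj α β f z j := by
  refine tsum_nonneg fun m => Set.indicator_nonneg (fun w _ => ?_) z
  refine div_nonneg ?_ (Real.rpow_nonneg (zpow_pos two_pos j).le _)
  refine setIntegral_nonneg (measurableSet_gridbox β j m) fun ξ hξ => ?_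
  exact mul_nonneg (hf ξ) (Real.rpow_nonneg (mem_gridbox_iff.mp hξ).2.2.1.le α)

lemma dyadicOp_nonneg (α β : ℝ) (f : ℂ → ℝ) (hf : ∀ ξ, 0 ≤ f ξ) (z : ℂ) :
    0 ≤ dyadicOp α β f z := by
  rw [dyadicOp_eq_tsum_Tj]
  exact tsum_nonneg fun j => Tj_nonneg α β f hf z j

lemma Tj_eq (α β : ℝ) (f : ℂ → ℝ) (z : ℂ) {j m : ℤ} (hzm : z ∈ gridbox β j m) :
    Tj α β f z j = (∫ ξ in gridbox β j m, f ξ * ξ.im ^ α) / ((2:ℝ)^j) ^ (2 + α) := by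
  rw [Tj, tsum_eq_single m, Set.indicator_of_mem hzm]
  intro m' hne
  rw [Set.indicator_of_notMem]
  intro hzm'
  exact hne (gridbox_unique hzm hzm')

lemma Tj_zero (α β : ℝ) (f : ℂ → ℝ) (z : ℂ) {j : ℤ} (h : (2:ℝ)^j < z.im) :
    Tj α β f z j = 0 := by
  have hz : ∀ m : ℤ, z ∉ gridbox β j m := by
    intro m hm
    have := (mem_gridbox_iff.mp hm).2.2.2
    rw [gridbox_width] at this
    linarith
  rw [Tj]
  have : ∀ m : ℤ, (gridbox β j m).indicator
      (fun _ => (∫ ξ in gridbox β j m, f ξ * ξ.im ^ α) / ((2:ℝ)^j) ^ (2 + α)) z = 0 :=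
    fun m => Set.indicator_of_notMem (hz m) _
  exact (tsum_congr this).trans tsum_zero

/-- On a grid box containing `z`, the weight `f ξ (Im ξ)^α` is integrable whenever the
Bergman integrand at `z` is integrable on the upper half plane. -/
lemma fim_integrableOn (α : ℝ) (hα : -1 < α) (f : ℂ → ℝ) (hf : ∀ ξ, 0 ≤ f ξ) {z : ℂ}
    (hz : 0 < z.im) {β : ℝ} {j m : ℤ}
    (hg : IntegrableOn (gfun α f z) UHP)
    (hzB : z ∈ gridbox β j m) :
    IntegrableOn (fun ξ => f ξ * ξ.im ^ α) (gridbox β j m) := by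
  have hp : (0:ℝ) < 2 + α := by linarith
  have hBU : gridbox β j m ⊆ UHP := gridbox_subset_UHP β j m
  have hgB : IntegrableOn (gfun α f z) (gridbox β j m) := hg.mono_set hBU
  have hC : Integrable (fun ξ => (3 * (2:ℝ)^j) ^ (2+α) * gfun α f z ξ)
      (volume.restrict (gridbox β j m)) := hgB.const_mul _
  refine Integrable.mono' hC ?_ ?_
  · have hcont : Continuous fun ξ : ℂ => ‖z - (starRingEnd ℂ) ξ‖ ^ (2+α) :=
      (Real.continuous_rpow_const hp.le).comp
        (continuous_norm.comp (continuous_const.sub Complex.continuous_conj))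
    have hmul : AEStronglyMeasurable
        (fun ξ => gfun α f z ξ * ‖z - (starRingEnd ℂ) ξ‖ ^ (2+α))
        (volume.restrict (gridbox β j m)) :=
      hgB.aestronglyMeasurable.mul hcont.aestronglyMeasurable
    refine hmul.congr ?_
    filter_upwards [ae_restrict_mem (measurableSet_gridbox β j m)] with ξ hξ
    have him : 0 < ξ.im := (mem_gridbox_iff.mp hξ).2.2.1
    have hrr : 0 < ‖z - (starRingEnd ℂ) ξ‖ := (rr_facts hz him).1
    have hne : ‖z - (starRingEnd ℂ) ξ‖ ^ (2+α) ≠ 0 :=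
      (Real.rpow_pos_of_pos hrr _).ne'
    rw [gfun]
    field_simp
  · filter_upwards [ae_restrict_mem (measurableSet_gridbox β j m)] with ξ hξ
    have him : 0 < ξ.im := (mem_gridbox_iff.mp hξ).2.2.1
    have hrr : 0 < ‖z - (starRingEnd ℂ) ξ‖ := (rr_facts hz him).1
    have hfim : 0 ≤ f ξ * ξ.im ^ α := mul_nonneg (hf ξ) (Real.rpow_nonneg him.le α)
    rw [Real.norm_eq_abs, abs_of_nonneg hfim]
    have hne : ‖z - (starRingEnd ℂ) ξ‖ ^ (2+α) ≠ 0 :=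
      (Real.rpow_pos_of_pos hrr _).ne'
    have heq : f ξ * ξ.im ^ α = gfun α f z ξ * ‖z - (starRingEnd ℂ) ξ‖ ^ (2+α) := by
      rw [gfun]; field_simp
    rw [heq, mul_comm ((3 * (2:ℝ)^j) ^ (2+α)) (gfun α f z ξ)]
    have hgnn : 0 ≤ gfun α f z ξ :=
      mul_nonneg (div_nonneg (hf ξ) (Real.rpow_nonneg hrr.le _)) (Real.rpow_nonneg him.le α)
    refine mul_le_mul_of_nonneg_left ?_ hgnn
    exact Real.rpow_le_rpow hrr.le (abs_le_of_mem_gridbox hzB hξ) hp.le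

lemma pow_helper (p : ℝ) (k : ℤ) :
    ((2:ℝ)^k) ^ (-p) = (2:ℝ)^(4*p) / ((2:ℝ)^(k+4)) ^ p := by
  rw [← Real.rpow_intCast 2 k, ← Real.rpow_intCast 2 (k+4),
    ← Real.rpow_mul (by norm_num), ← Real.rpow_mul (by norm_num),
    eq_div_iff (Real.rpow_pos_of_pos two_pos _).ne', ← Real.rpow_add two_pos]
  congr 1
  push_cast
  ring

lemma q_helper (p : ℝ) (j : ℤ) : ((2:ℝ)^j) ^ (-p) = ((2:ℝ)^(-p)) ^ j := by
  rw [← Real.rpow_intCast 2 j, ← Real.rpow_mul (by norm_num : (0:ℝ) ≤ 2),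
    ← Real.rpow_intCast ((2:ℝ)^(-p)) j, ← Real.rpow_mul (by norm_num : (0:ℝ) ≤ 2)]
  congr 1
  ring

/-- Summability of the scale sums of the dyadic operator at a point, assuming integrability
of the Bergman integrand. -/
lemma Tj_summable (α : ℝ) (hα : -1 < α) (f : ℂ → ℝ) (hf : ∀ ξ, 0 ≤ f ξ) {z : ℂ}
    (hz : 0 < z.im) (hg : IntegrableOn (gfun α f z) UHP) (β : ℝ) :
    Summable (Tj α β f z) := by
  classical
  have hp : (0:ℝ) < 2 + α := by linarith
  set q : ℝ := (2:ℝ) ^ (-(2+α)) with hq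
  have hq0 : 0 < q := Real.rpow_pos_of_pos two_pos _
  have hq1 : q < 1 := Real.rpow_lt_one_of_one_lt_of_neg one_lt_two (by linarith)
  set Cpt : ℝ := (3:ℝ)^(2+α) * (1 - q)⁻¹ with hCpt
  have hCpt0 : 0 ≤ Cpt :=
    mul_nonneg (Real.rpow_nonneg (by norm_num) _) (inv_nonneg.mpr (by linarith))
  set B : ℤ → Set ℂ := fun j =>
    if z.im ≤ (2:ℝ)^j then gridbox β j ⌊z.re/(2:ℝ)^j - (-1:ℝ)^j * β⌋ else ∅ with hB
  have hBmem : ∀ j, z.im ≤ (2:ℝ)^j → z ∈ B j := by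
    intro j h
    rw [hB]
    simp only [if_pos h]
    exact mem_gridbox_floor hz h β
  have hBU : ∀ j, B j ⊆ UHP := by
    intro j
    rw [hB]
    dsimp only
    split
    · exact gridbox_subset_UHP _ _ _
    · exact Set.empty_subset _
  have hBmeas : ∀ j, MeasurableSet (B j) := by
    intro j
    rw [hB]
    dsimp only
    split
    · exact measurableSet_gridbox _ _ _
    · exact MeasurableSet.empty
  have hfimB : ∀ j, IntegrableOn (fun ξ => f ξ * ξ.im ^ α) (B j) := by
    intro j
    rw [hB]
    dsimp only
    split
    · next h => exact fim_integrableOn α hα f hf hz hg (mem_gridbox_floor hz h β)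
    · exact integrableOn_empty
  set H : ℤ → ℂ → ℝ := fun j =>
    (B j).indicator (fun ξ => (f ξ * ξ.im ^ α) * ((2:ℝ)^j)^(-(2+α))) with hH
  have hHint : ∀ j, Integrable (H j) (volume.restrict UHP) := by
    intro j
    have h1 : IntegrableOn (fun ξ => (f ξ * ξ.im ^ α) * ((2:ℝ)^j)^(-(2+α))) (B j) :=
      (hfimB j).mul_const _
    exact (h1.integrable_indicator (hBmeas j)).mono_measure Measure.restrict_le_self
  have hTjH : ∀ j, Tj α β f z j = ∫ ξ in UHP, H j ξ := by
    intro j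
    by_cases h : z.im ≤ (2:ℝ)^j
    · have hBj : B j = gridbox β j ⌊z.re/(2:ℝ)^j - (-1:ℝ)^j * β⌋ := by rw [hB]; simp [h]
      have hzB : z ∈ gridbox β j ⌊z.re/(2:ℝ)^j - (-1:ℝ)^j * β⌋ := mem_gridbox_floor hz h β
      rw [Tj_eq α β f z hzB, hH]
      rw [setIntegral_indicator (hBmeas j)]
      rw [Set.inter_eq_self_of_subset_right (hBU j)]
      rw [integral_mul_const, hBj]
      rw [Real.rpow_neg (zpow_pos two_pos j).le, div_eq_mul_inv]
    · rw [Tj_zero α β f z (lt_of_not_ge h)]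
      have hBj : B j = ∅ := by rw [hB]; simp [h]
      rw [hH]
      simp [hBj]
  refine summable_of_sum_le (c := Cpt * ∫ ξ in UHP, gfun α f z ξ)
    (fun j => Tj_nonneg α β f hf z j) ?_
  intro u
  have h1 : ∑ j ∈ u, Tj α β f z j = ∫ ξ in UHP, ∑ j ∈ u, H j ξ := by
    rw [integral_finset_sum u (fun j _ => hHint j)]
    exact Finset.sum_congr rfl fun j _ => hTjH j
  rw [h1]
  have h2 : ∫ ξ in UHP, ∑ j ∈ u, H j ξ ≤ ∫ ξ in UHP, Cpt * gfun α f z ξ := by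
    refine setIntegral_mono_on (integrable_finset_sum u (fun j _ => hHint j))
      (hg.const_mul _) measurableSet_UHP ?_
    intro ξ hξU
    have him : 0 < ξ.im := hξU
    have hrr : 0 < ‖z - (starRingEnd ℂ) ξ‖ := (rr_facts hz him).1
    have hfimnn : 0 ≤ f ξ * ξ.im ^ α := mul_nonneg (hf ξ) (Real.rpow_nonneg him.le α)
    have hgnn : 0 ≤ gfun α f z ξ :=
      mul_nonneg (div_nonneg (hf ξ) (Real.rpow_nonneg hrr.le _)) (Real.rpow_nonneg him.le α)
    have hgf : gfun α f z ξ
        = (f ξ * ξ.im ^ α) * (‖z - (starRingEnd ℂ) ξ‖ ^ (2+α))⁻¹ := by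
      rw [gfun]; ring
    have hsum : ∑ j ∈ u, H j ξ
        = ∑ j ∈ u.filter (fun j => ξ ∈ B j), (f ξ * ξ.im ^ α) * ((2:ℝ)^j)^(-(2+α)) := by
      rw [Finset.sum_filter]
      refine Finset.sum_congr rfl fun j _ => ?_
      by_cases h : ξ ∈ B j
      · rw [if_pos h, hH]; exact Set.indicator_of_mem h _
      · rw [if_neg h, hH]; exact Set.indicator_of_notMem h _
    rw [hsum]
    set u' := u.filter (fun j => ξ ∈ B j) with hu'
    rcases u'.eq_empty_or_nonempty with he | hne
    · rw [he, Finset.sum_empty]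
      exact mul_nonneg hCpt0 hgnn
    · set j₀ := u'.min' hne with hj₀
      have hj₀mem : j₀ ∈ u' := u'.min'_mem hne
      have hmemB : ∀ j, ξ ∈ B j → ‖z - (starRingEnd ℂ) ξ‖ ≤ 3 * (2:ℝ)^j := by
        intro j hmem
        by_cases h : z.im ≤ (2:ℝ)^j
        · have hBj : B j = gridbox β j ⌊z.re/(2:ℝ)^j - (-1:ℝ)^j * β⌋ := by rw [hB]; simp [h]
          exact abs_le_of_mem_gridbox (hBj ▸ hBmem j h) (hBj ▸ hmem)
        · exfalso
          rw [hB] at hmem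
          simp [h] at hmem
      have hξmemj : ∀ j ∈ u', ξ ∈ B j := fun j hj => (Finset.mem_filter.mp hj).2
      have hqne : q ≠ 0 := hq0.ne'
      have hsum3 : ∀ j ∈ u', q^j = q^j₀ * q^((j - j₀).toNat) := by
        intro j hj
        have hge : j₀ ≤ j := u'.min'_le j hj
        have htn : (((j - j₀).toNat : ℤ)) = j - j₀ := Int.toNat_of_nonneg (by omega)
        calc q^j = q^(j₀ + (j - j₀)) := by congr 1; omega
          _ = q^j₀ * q^(j - j₀) := zpow_add₀ hqne _ _
          _ = q^j₀ * q^((j - j₀).toNat) := by rw [← zpow_natCast q ((j - j₀).toNat), htn]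
      have hgeom : ∑ j ∈ u', q^j ≤ q^j₀ * (1-q)⁻¹ := by
        calc ∑ j ∈ u', q^j = ∑ j ∈ u', q^j₀ * q^((j - j₀).toNat) :=
              Finset.sum_congr rfl hsum3
          _ = q^j₀ * ∑ j ∈ u', q^((j - j₀).toNat) := by rw [Finset.mul_sum]
          _ ≤ q^j₀ * ∑' n : ℕ, q^n := by
              refine mul_le_mul_of_nonneg_left ?_ (zpow_nonneg hq0.le _)
              have hinj : ∀ x ∈ u', ∀ y ∈ u', (x - j₀).toNat = (y - j₀).toNat → x = y := by
                intro x hx y hy hxy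
                have hx' : j₀ ≤ x := u'.min'_le x hx
                have hy' : j₀ ≤ y := u'.min'_le y hy
                omega
              rw [← Finset.sum_image hinj]
              exact Summable.sum_le_tsum _ (fun n _ => pow_nonneg hq0.le n)
                (summable_geometric_of_lt_one hq0.le hq1)
          _ = q^j₀ * (1-q)⁻¹ := by rw [tsum_geometric_of_lt_one hq0.le hq1]
      have hq_j₀ : q^j₀ ≤ 3^(2+α) * (‖z - (starRingEnd ℂ) ξ‖ ^ (2+α))⁻¹ := by
        have hr3 : ‖z - (starRingEnd ℂ) ξ‖ ≤ 3 * (2:ℝ)^j₀ :=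
          hmemB j₀ (hξmemj j₀ hj₀mem)
        have h2j : (0:ℝ) < (2:ℝ)^j₀ := zpow_pos two_pos j₀
        have hXp : (0:ℝ) < ((2:ℝ)^j₀) ^ (2+α) := Real.rpow_pos_of_pos h2j _
        have hrp : (0:ℝ) < ‖z - (starRingEnd ℂ) ξ‖ ^ (2+α) :=
          Real.rpow_pos_of_pos hrr _
        have hrle : ‖z - (starRingEnd ℂ) ξ‖ ^ (2+α)
            ≤ 3^(2+α) * ((2:ℝ)^j₀)^(2+α) := by
          rw [← Real.mul_rpow (by norm_num) h2j.le]
          exact Real.rpow_le_rpow hrr.le hr3 hp.le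
        have heq : q^j₀ = (((2:ℝ)^j₀) ^ (2+α))⁻¹ := by
          rw [← q_helper, Real.rpow_neg h2j.le]
        rw [heq]
        have h6 : (1:ℝ) / (((2:ℝ)^j₀)^(2+α))
            ≤ 3^(2+α) / ‖z - (starRingEnd ℂ) ξ‖ ^ (2+α) :=
          (div_le_div_iff₀ hXp hrp).mpr (by linarith)
        calc (((2:ℝ)^j₀)^(2+α))⁻¹ = 1 / (((2:ℝ)^j₀)^(2+α)) := (one_div _).symm
          _ ≤ 3^(2+α) / ‖z - (starRingEnd ℂ) ξ‖ ^ (2+α) := h6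
          _ = 3^(2+α) * (‖z - (starRingEnd ℂ) ξ‖ ^ (2+α))⁻¹ := div_eq_mul_inv _ _
      have hsum2 : ∑ j ∈ u', (f ξ * ξ.im ^ α) * ((2:ℝ)^j)^(-(2+α))
          = (f ξ * ξ.im ^ α) * ∑ j ∈ u', q^j := by
        rw [Finset.mul_sum]
        exact Finset.sum_congr rfl fun j _ => by rw [q_helper]
      rw [hsum2]
      calc (f ξ * ξ.im ^ α) * ∑ j ∈ u', q^j
          ≤ (f ξ * ξ.im ^ α) * (q^j₀ * (1-q)⁻¹) := mul_le_mul_of_nonneg_left hgeom hfimnn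
        _ ≤ (f ξ * ξ.im ^ α)
            * ((3^(2+α) * (‖z - (starRingEnd ℂ) ξ‖ ^ (2+α))⁻¹) * (1-q)⁻¹) := by
            exact mul_le_mul_of_nonneg_left
              (mul_le_mul_of_nonneg_right hq_j₀ (inv_nonneg.mpr (by linarith))) hfimnn
        _ = Cpt * gfun α f z ξ := by rw [hCpt, hgf]; ring
  calc ∫ ξ in UHP, ∑ j ∈ u, H j ξ ≤ ∫ ξ in UHP, Cpt * gfun α f z ξ := h2
    _ = Cpt * ∫ ξ in UHP, gfun α f z ξ := integral_const_mul _ _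

/-- pointwise domination of the maximal Bergman projection by the two
dyadic model operators. -/
theorem maxBergman_le_dyadic (α : ℝ) (hα : -1 < α) :
    ∃ C > 0, ∀ f : ℂ → ℝ, (∀ ξ, 0 ≤ f ξ) → LocallyIntegrableOn f UHP →
      ∀ z ∈ UHP, maxBergman α f z ≤ C * (dyadicOp α 0 f z + dyadicOp α (1/3) f z) := by
  have hp : (0:ℝ) < 2 + α := by linarith
  refine ⟨(2:ℝ) ^ (4*(2+α)), Real.rpow_pos_of_pos two_pos _, ?_⟩
  intro f hf hloc z hz
  have hz' : 0 < z.im := hz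
  have hRHS0 : 0 ≤ dyadicOp α 0 f z + dyadicOp α (1/3) f z :=
    add_nonneg (dyadicOp_nonneg _ _ f hf z) (dyadicOp_nonneg _ _ f hf z)
  by_cases hg : IntegrableOn (gfun α f z) UHP
  case neg =>
    rw [maxBergman_eq, integral_undef hg]
    exact mul_nonneg (Real.rpow_pos_of_pos two_pos _).le hRHS0
  case pos =>
  classical
  set E : ℤ → Set ℂ := fun k =>
    {ξ | ξ ∈ UHP ∧ (2:ℝ)^k ≤ ‖z - (starRingEnd ℂ) ξ‖ ∧
      ‖z - (starRingEnd ℂ) ξ‖ < (2:ℝ)^(k+1)} with hE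
  have hEU : ∀ k, E k ⊆ UHP := by
    intro k ξ hξ
    rw [hE] at hξ
    exact hξ.1
  have hEmeas : ∀ k, MeasurableSet (E k) := by
    intro k
    have hc : Measurable fun ξ : ℂ => ‖z - (starRingEnd ℂ) ξ‖ :=
      (continuous_norm.comp (continuous_const.sub Complex.continuous_conj)).measurable
    have hEk : E k = UHP ∩ (fun ξ : ℂ => ‖z - (starRingEnd ℂ) ξ‖) ⁻¹'
        (Set.Ico ((2:ℝ)^k) ((2:ℝ)^(k+1))) := by
      ext ξ
      simp only [hE, Set.mem_setOf_eq, Set.mem_inter_iff, Set.mem_preimage, Set.mem_Ico]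
    rw [hEk]
    exact measurableSet_UHP.inter (hc measurableSet_Ico)
  have hEdisj : Pairwise (Function.onFun Disjoint E) := by
    intro k k' hkk'
    rw [Function.onFun, Set.disjoint_left]
    intro ξ hξ hξ'
    rw [hE] at hξ hξ'
    simp only [Set.mem_setOf_eq] at hξ hξ'
    rcases lt_or_gt_of_ne hkk' with h | h
    · have h1 : (k:ℤ) + 1 ≤ k' := by omega
      have h2 : (2:ℝ)^(k+1) ≤ (2:ℝ)^k' := zpow_le_zpow_right₀ one_le_two h1
      linarith [hξ.2.2, hξ'.2.1]
    · have h1 : (k':ℤ) + 1 ≤ k := by omega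
      have h2 : (2:ℝ)^(k'+1) ≤ (2:ℝ)^k := zpow_le_zpow_right₀ one_le_two h1
      linarith [hξ'.2.2, hξ.2.1]
  have hEunion : (⋃ k, E k) = UHP := by
    apply Set.Subset.antisymm (Set.iUnion_subset hEU)
    intro ξ hξ
    have him : 0 < ξ.im := hξ
    have hrr : 0 < ‖z - (starRingEnd ℂ) ξ‖ := (rr_facts hz' him).1
    obtain ⟨k, hk1, hk2⟩ := exists_mem_Ico_zpow hrr one_lt_two
    exact Set.mem_iUnion.mpr ⟨k, hξ, hk1, hk2⟩
  have hgU : IntegrableOn (gfun α f z) (⋃ k, E k) := hEunion ▸ hg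
  have hSum := hasSum_integral_iUnion hEmeas hEdisj hgU
  rw [hEunion] at hSum
  have hs0 : Summable (Tj α 0 f z) := Tj_summable α hα f hf hz' hg 0
  have hs3 : Summable (Tj α (1/3) f z) := Tj_summable α hα f hf hz' hg (1/3)
  have key : ∀ k : ℤ, (∫ ξ in E k, gfun α f z ξ)
      ≤ (2:ℝ)^(4*(2+α)) * (Tj α 0 f z (k+4) + Tj α (1/3) f z (k+4)) := by
    intro k
    have hTnn : 0 ≤ Tj α 0 f z (k+4) + Tj α (1/3) f z (k+4) :=
      add_nonneg (Tj_nonneg α 0 f hf z _) (Tj_nonneg α (1/3) f hf z _)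
    by_cases hk : z.im ≤ (2:ℝ)^(k+4)
    case neg =>
      have hEk : E k = ∅ := by
        ext ξ
        simp only [hE, Set.mem_setOf_eq, Set.mem_empty_iff_false, iff_false, not_and]
        intro hξU h1
        have him : 0 < ξ.im := hξU
        have h3 : z.im + ξ.im ≤ ‖z - (starRingEnd ℂ) ξ‖ := (rr_facts hz' him).2.1
        have h4 : (2:ℝ)^(k+1) ≤ (2:ℝ)^(k+4) := zpow_le_zpow_right₀ one_le_two (by omega)
        push_neg at hk
        intro h2
        linarith
      rw [hEk, Measure.restrict_empty, integral_zero_measure]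
      exact mul_nonneg (Real.rpow_pos_of_pos two_pos _).le hTnn
    case pos =>
      obtain ⟨β, hβ, m, hL, hR⟩ := onethird (k+4) z.re
      have hρ : (0:ℝ) < (2:ℝ)^(k+4)/7 := by positivity
      have hzB : z ∈ gridbox β (k+4) m := by
        refine mem_gridbox_iff.mpr ⟨by linarith, by linarith, hz', ?_⟩
        rw [gridbox_width]
        exact hk
      have h8 : (2:ℝ)^(k+4) = (2:ℝ)^(k+1) * 8 := by
        rw [show (k:ℤ)+4 = (k+1)+3 by ring, zpow_add₀ (by norm_num : (2:ℝ) ≠ 0)]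
        norm_num
      have hk1pos : (0:ℝ) < (2:ℝ)^(k+1) := zpow_pos two_pos _
      have h814 : (2:ℝ)^(k+1) ≤ (2:ℝ)^(k+4)/7 := by rw [h8]; linarith
      have h4 : (2:ℝ)^(k+1) ≤ (2:ℝ)^(k+4) := zpow_le_zpow_right₀ one_le_two (by omega)
      have hEB : E k ⊆ gridbox β (k+4) m := by
        intro ξ hξ
        rw [hE] at hξ
        obtain ⟨hξU, h1, h2⟩ := hξ
        have him : 0 < ξ.im := hξU
        obtain ⟨hrr, him_le, hre_le⟩ := rr_facts hz' him
        have hre : |z.re - ξ.re| ≤ (2:ℝ)^(k+4)/7 := by linarith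
        have habs := abs_le.mp hre
        refine mem_gridbox_iff.mpr ⟨by linarith [habs.2], by linarith [habs.1], him, ?_⟩
        rw [gridbox_width]
        linarith
      have hfimB : IntegrableOn (fun ξ => f ξ * ξ.im ^ α) (gridbox β (k+4) m) :=
        fim_integrableOn α hα f hf hz' hg hzB
      have hki : (0:ℝ) < (2:ℝ)^k := zpow_pos two_pos k
      have step1 : (∫ ξ in E k, gfun α f z ξ)
          ≤ ∫ ξ in E k, (f ξ * ξ.im ^ α) * ((2:ℝ)^k)^(-(2+α)) := by
        refine setIntegral_mono_on (hg.mono_set (hEU k))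
          ((hfimB.mono_set hEB).mul_const _) (hEmeas k) ?_
        intro ξ hξ
        rw [hE] at hξ
        obtain ⟨hξU, h1, h2⟩ := hξ
        have him : 0 < ξ.im := hξU
        have hrr : 0 < ‖z - (starRingEnd ℂ) ξ‖ := (rr_facts hz' him).1
        have hgf : gfun α f z ξ
            = (f ξ * ξ.im ^ α) * (‖z - (starRingEnd ℂ) ξ‖ ^ (2+α))⁻¹ := by
          rw [gfun]; ring
        rw [hgf, Real.rpow_neg hki.le]
        refine mul_le_mul_of_nonneg_left ?_ (mul_nonneg (hf ξ) (Real.rpow_nonneg him.le α))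
        exact inv_anti₀ (Real.rpow_pos_of_pos hki _)
          (Real.rpow_le_rpow hki.le h1 hp.le)
      have step2 : ∫ ξ in E k, (f ξ * ξ.im ^ α) * ((2:ℝ)^k)^(-(2+α))
          = ((2:ℝ)^k)^(-(2+α)) * ∫ ξ in E k, f ξ * ξ.im ^ α := by
        rw [integral_mul_const]; ring
      have step3 : ∫ ξ in E k, f ξ * ξ.im ^ α ≤ ∫ ξ in gridbox β (k+4) m, f ξ * ξ.im ^ α := by
        refine setIntegral_mono_set hfimB ?_ (HasSubset.Subset.eventuallyLE hEB)
        filter_upwards [ae_restrict_mem (measurableSet_gridbox β (k+4) m)] with ξ hξ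
        exact mul_nonneg (hf ξ) (Real.rpow_nonneg (mem_gridbox_iff.mp hξ).2.2.1.le α)
      have hTval : Tj α β f z (k+4)
          = (∫ ξ in gridbox β (k+4) m, f ξ * ξ.im ^ α) / ((2:ℝ)^(k+4)) ^ (2+α) :=
        Tj_eq α β f z hzB
      have hfin : ((2:ℝ)^k)^(-(2+α)) * ∫ ξ in gridbox β (k+4) m, f ξ * ξ.im ^ α
          = (2:ℝ)^(4*(2+α)) * Tj α β f z (k+4) := by
        rw [hTval, pow_helper (2+α) k]
        ring
      have hβcase : Tj α β f z (k+4) ≤ Tj α 0 f z (k+4) + Tj α (1/3) f z (k+4) := by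
        rcases Set.mem_insert_iff.mp hβ with h | h
        · rw [h]
          exact le_add_of_nonneg_right (Tj_nonneg α (1/3) f hf z _)
        · rw [Set.mem_singleton_iff.mp h]
          exact le_add_of_nonneg_left (Tj_nonneg α 0 f hf z _)
      calc (∫ ξ in E k, gfun α f z ξ)
          ≤ ∫ ξ in E k, (f ξ * ξ.im ^ α) * ((2:ℝ)^k)^(-(2+α)) := step1
        _ = ((2:ℝ)^k)^(-(2+α)) * ∫ ξ in E k, f ξ * ξ.im ^ α := step2
        _ ≤ ((2:ℝ)^k)^(-(2+α)) * ∫ ξ in gridbox β (k+4) m, f ξ * ξ.im ^ α :=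
            mul_le_mul_of_nonneg_left step3 (Real.rpow_nonneg hki.le _)
        _ = (2:ℝ)^(4*(2+α)) * Tj α β f z (k+4) := hfin
        _ ≤ (2:ℝ)^(4*(2+α)) * (Tj α 0 f z (k+4) + Tj α (1/3) f z (k+4)) :=
            mul_le_mul_of_nonneg_left hβcase (Real.rpow_nonneg two_pos.le _)
  have hsum4 : Summable (fun k : ℤ => Tj α 0 f z (k+4)) :=
    hs0.comp_injective (add_left_injective 4)
  have hsum4' : Summable (fun k : ℤ => Tj α (1/3) f z (k+4)) :=
    hs3.comp_injective (add_left_injective 4)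
  calc maxBergman α f z = ∑' k : ℤ, ∫ ξ in E k, gfun α f z ξ := by
        rw [maxBergman_eq]; exact hSum.tsum_eq.symm
    _ ≤ ∑' k : ℤ, (2:ℝ)^(4*(2+α)) * (Tj α 0 f z (k+4) + Tj α (1/3) f z (k+4)) :=
        Summable.tsum_le_tsum key hSum.summable ((hsum4.add hsum4').mul_left _)
    _ = (2:ℝ)^(4*(2+α)) * ((∑' k : ℤ, Tj α 0 f z (k+4)) + ∑' k : ℤ, Tj α (1/3) f z (k+4)) := by
        rw [tsum_mul_left, Summable.tsum_add hsum4 hsum4']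
    _ ≤ (2:ℝ)^(4*(2+α)) * (dyadicOp α 0 f z + dyadicOp α (1/3) f z) := by
        refine mul_le_mul_of_nonneg_left (add_le_add ?_ ?_)
          (Real.rpow_pos_of_pos two_pos _).le
        · rw [dyadicOp_eq_tsum_Tj]
          exact Summable.tsum_le_tsum_of_inj (fun k => k+4) (add_left_injective 4)
            (fun c _ => Tj_nonneg α 0 f hf z c) (fun k => le_rfl) hsum4 hs0
        · rw [dyadicOp_eq_tsum_Tj]
          exact Summable.tsum_le_tsum_of_inj (fun k => k+4) (add_left_injective 4)
            (fun c _ => Tj_nonneg α (1/3) f hf z c) (fun k => le_rfl) hsum4' hs3
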